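/- Let L be a Lie algebra over ℂ, f_1, …, f_N ∈ L, and > a monomial order on ℕ^N such that (f_1, …, f_N) together with > is quasi-commutative. Let V be a module over L (equivalently over U(L)), v ∈ V, m ∈ ℕ^N and i ∈ {1,…,N}. If f^{(m)}·v ∈ span_ℂ{f^{(k)}·v : k ∈ ℕ^N, k < m}, then f^{(m+e_i)}·v ∈ span_ℂ{f^{(k)}·v : k ∈ ℕ^N, k < m + e_i}. Equivalently: if m is not essential for (V, v), then m + e_i is not essential for (V, v). -/

import Mathlib

open Finset

attribute [local instance 100] LieRing.ofAssociativeRing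

noncomputable section

variable {L : Type*} [LieRing L] [LieAlgebra ℂ L]

/-- The ordered monomial `f^m = ι(f₁)^{m₁} ⋯ ι(f_N)^{m_N}` in `U(L)`. -/
def ordMon {N : ℕ} (f : Fin N → L) (m : Fin N → ℕ) : UniversalEnvelopingAlgebra ℂ L :=
  (List.ofFn fun i => (UniversalEnvelopingAlgebra.ι ℂ (f i)) ^ (m i)).prod

/-- The ordered monomial in divided powers `f^{(m)} = (1/(m₁! ⋯ m_N!)) f^m` in `U(L)`. -/
def divMon {N : ℕ} (f : Fin N → L) (m : Fin N → ℕ) : UniversalEnvelopingAlgebra ℂ L :=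
  ((∏ i, ((m i).factorial : ℂ)))⁻¹ • ordMon f m

/-- The product `ι(f_{i₁}) ⋯ ι(f_{i_t})` in `U(L)` associated to a word `w`. -/
def wordProd {N : ℕ} (f : Fin N → L) {t : ℕ} (w : Fin t → Fin N) :
    UniversalEnvelopingAlgebra ℂ L :=
  (List.ofFn fun l => UniversalEnvelopingAlgebra.ι ℂ (f (w l))).prod

/-- The exponent of a word: its `k`-th coordinate is the number of occurrences of the
letter `k` in the word. -/
def expOf {N t : ℕ} (w : Fin t → Fin N) : Fin N → ℕ :=
  fun k => (Finset.univ.filter fun l => w l = k).card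

/-- `(f₁, …, f_N)` together with the order `r` (where `r m n` means `m > n`) is
quasi-commutative: every product `ι(f_{i₁}) ⋯ ι(f_{i_t})` lies in
`f^{exp(i₁,…,i_t)} + span ℂ {f^n : n < exp(i₁,…,i_t)}`. -/
def QuasiCommutative {N : ℕ} (f : Fin N → L)
    (r : (Fin N → ℕ) → (Fin N → ℕ) → Prop) : Prop :=
  ∀ (t : ℕ) (w : Fin t → Fin N),
    wordProd f w - ordMon f (expOf w) ∈
      Submodule.span ℂ {x : UniversalEnvelopingAlgebra ℂ L |
        ∃ n : Fin N → ℕ, r (expOf w) n ∧ x = ordMon f n}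

variable {V : Type*} [AddCommGroup V] [Module ℂ V]

/-- The action of an element `u` of `U(L)` on a vector `v` of an `L`-module `V`, where
the `L`-module structure is given by the representation `ρ : L → End ℂ V`. -/
def uAct (ρ : L →ₗ⁅ℂ⁆ Module.End ℂ V) (u : UniversalEnvelopingAlgebra ℂ L) (v : V) : V :=
  (UniversalEnvelopingAlgebra.lift ℂ ρ u) v

/-- `m ∈ ℕ^N` is essential for `(V, v)` if `f^{(m)}·v ∉ span ℂ {f^{(k)}·v : k < m}`. -/
def EssentialFor {N : ℕ} (f : Fin N → L) (r : (Fin N → ℕ) → (Fin N → ℕ) → Prop)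
    (ρ : L →ₗ⁅ℂ⁆ Module.End ℂ V) (v : V) (m : Fin N → ℕ) : Prop :=
  uAct ρ (divMon f m) v ∉
    Submodule.span ℂ {x : V | ∃ k : Fin N → ℕ, r m k ∧ x = uAct ρ (divMon f k) v}


theorem count_ofFn' {α : Type*} [DecidableEq α] {n : ℕ} (w : Fin n → α) (a : α) :
    (List.ofFn w).count a = (Finset.univ.filter fun i => w i = a).card := by
  induction n with
  | zero => simp
  | succ n ih =>
    rw [List.ofFn_succ, List.count_cons, ih fun i => w i.succ]
    rw [Finset.card_filter, Finset.card_filter, Fin.sum_univ_succ]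
    simp [add_comm]

theorem expOf_get' {N : ℕ} (l : List (Fin N)) : expOf l.get = fun k => l.count k := by
  funext k
  rw [expOf, ← count_ofFn' l.get k, List.ofFn_get]

theorem wordProd_get' {N : ℕ} (f : Fin N → L) (l : List (Fin N)) :
    wordProd f l.get = (l.map fun j => UniversalEnvelopingAlgebra.ι ℂ (f j)).prod := by
  conv_rhs => rw [← List.ofFn_get l, List.map_ofFn]
  rfl

def mword {N : ℕ} (k : Fin N → ℕ) : List (Fin N) :=
  (List.ofFn fun j => List.replicate (k j) j).flatten

theorem count_mword {N : ℕ} (k : Fin N → ℕ) (a : Fin N) : (mword k).count a = k a := by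
  rw [mword, List.count_flatten, List.map_ofFn, List.sum_ofFn]
  simp [List.count_replicate, Function.comp]


theorem prod_mword {N : ℕ} (f : Fin N → L) (k : Fin N → ℕ) :
    ((mword k).map fun j => UniversalEnvelopingAlgebra.ι ℂ (f j)).prod = ordMon f k := by
  rw [mword, List.map_flatten, List.map_ofFn, List.prod_flatten, List.map_ofFn, ordMon]
  have : (List.prod ∘ (List.map fun j => UniversalEnvelopingAlgebra.ι ℂ (f j)) ∘
      fun j => List.replicate (k j) j) = fun i => UniversalEnvelopingAlgebra.ι ℂ (f i) ^ k i := by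
    funext j
    simp [Function.comp, List.map_replicate, List.prod_replicate]
  rw [this]


theorem qc_step {N : ℕ} (f : Fin N → L)
    (r : (Fin N → ℕ) → (Fin N → ℕ) → Prop) (hqc : QuasiCommutative f r)
    (k : Fin N → ℕ) (i : Fin N) :
    UniversalEnvelopingAlgebra.ι ℂ (f i) * ordMon f k - ordMon f (k + Pi.single i 1) ∈
      Submodule.span ℂ {x : UniversalEnvelopingAlgebra ℂ L |
        ∃ n : Fin N → ℕ, r (k + Pi.single i 1) n ∧ x = ordMon f n} := by
  have h := hqc (i :: mword k).length (i :: mword k).get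
  have he : expOf (i :: mword k).get = k + Pi.single i 1 := by
    rw [expOf_get']
    funext a
    simp only [List.count_cons, count_mword, Pi.add_apply, Pi.single_apply]
    by_cases hia : i = a
    · subst hia; simp
    · simp [hia, Ne.symm hia]
  have hw : wordProd f (i :: mword k).get = UniversalEnvelopingAlgebra.ι ℂ (f i) * ordMon f k := by
    rw [wordProd_get', List.map_cons, List.prod_cons, prod_mword]
  rwa [hw, he] at h

/-- Let `r` be a monomial order on `ℕ^N` and suppose `(f₁, …, f_N)` is quasi-commutative
with respect to `r`.  Let `V` be an `L`-module (given by `ρ : L → End ℂ V`), `v ∈ V`,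
`m ∈ ℕ^N` and `i ∈ {1,…,N}`.  If `f^{(m)}·v ∈ span ℂ {f^{(k)}·v : k < m}`, then
`f^{(m+eᵢ)}·v ∈ span ℂ {f^{(k)}·v : k < m + eᵢ}`; equivalently, if `m` is not essential
for `(V, v)` then neither is `m + eᵢ`. -/
theorem not_essential_add_single {N : ℕ} {L : Type*} [LieRing L] [LieAlgebra ℂ L]
    (f : Fin N → L) (r : (Fin N → ℕ) → (Fin N → ℕ) → Prop)
    (hirr : ∀ m, ¬ r m m)
    (htrans : ∀ a b c, r a b → r b c → r a c)
    (htot : ∀ a b, a = b ∨ r a b ∨ r b a)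
    (hadd : ∀ a b k, r a b → r (a + k) (b + k))
    (hpos : ∀ m k : Fin N → ℕ, k ≠ 0 → r (m + k) m)
    (hqc : QuasiCommutative f r)
    {V : Type*} [AddCommGroup V] [Module ℂ V]
    (ρ : L →ₗ⁅ℂ⁆ Module.End ℂ V) (v : V) (m : Fin N → ℕ) (i : Fin N)
    (h : uAct ρ (divMon f m) v ∈
      Submodule.span ℂ {x : V | ∃ k : Fin N → ℕ, r m k ∧ x = uAct ρ (divMon f k) v}) :
    uAct ρ (divMon f (m + Pi.single i 1)) v ∈
      Submodule.span ℂ {x : V |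
        ∃ k : Fin N → ℕ, r (m + Pi.single i 1) k ∧ x = uAct ρ (divMon f k) v} := by
  classical
  set μ := m + Pi.single i 1 with hμ
  set S := Submodule.span ℂ {x : V |
      ∃ k : Fin N → ℕ, r μ k ∧ x = uAct ρ (divMon f k) v} with hS
  let T : UniversalEnvelopingAlgebra ℂ L →ₗ[ℂ] V :=
    (LinearMap.applyₗ v).comp (UniversalEnvelopingAlgebra.lift ℂ ρ).toLinearMap
  have hT : ∀ u, T u = uAct ρ u v := fun u => rfl
  set c : (Fin N → ℕ) → ℂ := fun n => ∏ j, ((n j).factorial : ℂ) with hc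
  have hcne : ∀ n, c n ≠ 0 := fun n =>
    Finset.prod_ne_zero_iff.mpr fun j _ => Nat.cast_ne_zero.mpr (Nat.factorial_ne_zero _)
  have hdiv : ∀ n, T (divMon f n) = (c n)⁻¹ • T (ordMon f n) := fun n => by
    rw [divMon, map_smul]
  have hord : ∀ n, T (ordMon f n) = c n • uAct ρ (divMon f n) v := fun n => by
    rw [← hT, hdiv, smul_inv_smul₀ (hcne n)]
  have hordS : ∀ n, r μ n → T (ordMon f n) ∈ S := fun n hn => by
    rw [hord]
    exact S.smul_mem _ (Submodule.subset_span ⟨n, hn, rfl⟩)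
  have hTspan : ∀ a : Fin N → ℕ, (∀ n, r a n → r μ n) →
      ∀ x ∈ Submodule.span ℂ {x : UniversalEnvelopingAlgebra ℂ L |
        ∃ n : Fin N → ℕ, r a n ∧ x = ordMon f n}, T x ∈ S := by
    intro a ha x hx
    have hx' : T x ∈ Submodule.map T (Submodule.span ℂ {x : UniversalEnvelopingAlgebra ℂ L |
        ∃ n : Fin N → ℕ, r a n ∧ x = ordMon f n}) := Submodule.mem_map_of_mem hx
    rw [Submodule.map_span] at hx'
    refine Submodule.span_le.mpr ?_ hx'
    rintro y ⟨u, ⟨n, hn, rfl⟩, rfl⟩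
    exact hordS n (ha n hn)
  have hmul : ∀ u, T (UniversalEnvelopingAlgebra.ι ℂ (f i) * u) = ρ (f i) (T u) := fun u => by
    show (UniversalEnvelopingAlgebra.lift ℂ ρ (UniversalEnvelopingAlgebra.ι ℂ (f i) * u)) v = _
    rw [map_mul, UniversalEnvelopingAlgebra.lift_ι_apply]
    rfl
  have key : ∀ k : Fin N → ℕ, r m k → ρ (f i) (uAct ρ (divMon f k) v) ∈ S := by
    intro k hk
    have hμk : r μ (k + Pi.single i 1) := hadd m k (Pi.single i 1) hk
    have h1 : T (UniversalEnvelopingAlgebra.ι ℂ (f i) * ordMon f k) ∈ S := by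
      have herr := qc_step f r hqc k i
      have h2 : T (UniversalEnvelopingAlgebra.ι ℂ (f i) * ordMon f k
          - ordMon f (k + Pi.single i 1)) ∈ S :=
        hTspan (k + Pi.single i 1) (fun n hn => htrans _ _ _ hμk hn) _ herr
      rw [map_sub] at h2
      have h3 : T (ordMon f (k + Pi.single i 1)) ∈ S := hordS _ hμk
      have := S.add_mem h2 h3
      simpa using this
    have h4 : ρ (f i) (T (ordMon f k)) ∈ S := by rw [← hmul]; exact h1
    rw [hord] at h4
    have h5 : (c k)⁻¹ • (ρ (f i)) (c k • uAct ρ (divMon f k) v) ∈ S := S.smul_mem _ h4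
    rwa [map_smul, inv_smul_smul₀ (hcne k)] at h5
  have h2 : ρ (f i) (uAct ρ (divMon f m) v) ∈ S := by
    have hx' : ρ (f i) (uAct ρ (divMon f m) v) ∈ Submodule.map (ρ (f i))
        (Submodule.span ℂ {x : V | ∃ k : Fin N → ℕ, r m k ∧ x = uAct ρ (divMon f k) v}) :=
      Submodule.mem_map_of_mem h
    rw [Submodule.map_span] at hx'
    refine Submodule.span_le.mpr ?_ hx'
    rintro y ⟨u, ⟨k, hk, rfl⟩, rfl⟩
    exact key k hk
  have hμm : r μ m := hpos m (Pi.single i 1) (by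
    intro h0
    have := congrFun h0 i
    simp at this)
  have h1 : T (UniversalEnvelopingAlgebra.ι ℂ (f i) * ordMon f m) ∈ S := by
    rw [hmul, hord, map_smul]
    exact S.smul_mem _ h2
  have herr := qc_step f r hqc m i
  have h3 : T (UniversalEnvelopingAlgebra.ι ℂ (f i) * ordMon f m - ordMon f μ) ∈ S :=
    hTspan μ (fun n hn => hn) _ herr
  rw [map_sub] at h3
  have h4 : T (ordMon f μ) ∈ S := by
    have := S.sub_mem h1 h3
    simpa using this
  have h5 : uAct ρ (divMon f μ) v ∈ S := by
    rw [← hT, hdiv]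
    exact S.smul_mem _ h4
  exact h5


end
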